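/- Let G be a finite group and a_1, ..., a_n elements of G such that each centralizer C_G(a_i) is abelian. Suppose G = A_1 ⊎ A_2 ⊎ ... ⊎ A_n is an abelian partition with A_1 = C_G(a_1) and A_i = C_G(a_i) \ Z(G) for i ≥ 2. Then this partition is minimal, i.e., every abelian partition of G has at least n parts. -/
import Mathlib


/-- An abelian partition of a group `G`: a family of `n` pairwise disjoint sets covering `G`,
each of size at least 2 and consisting of pairwise commuting elements. -/
def IsAbelianPartition {G : Type*} [Group G] {n : ℕ} (A : Fin n → Set G) : Prop :=
  (∀ i, 2 ≤ (A i).ncard) ∧ (⋃ i, A i) = Set.univ ∧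
    Pairwise (Function.onFun Disjoint A) ∧
    ∀ i, ∀ x ∈ A i, ∀ y ∈ A i, x * y = y * x

/-- The minimal number of parts in an abelian partition of `G` (0 if none exists). -/
noncomputable def apDegree (G : Type*) [Group G] : ℕ :=
  sInf {n | ∃ A : Fin n → Set G, IsAbelianPartition A}

/-- The maximal size of a noncommuting subset of `G`. -/
noncomputable def maxNoncommuting (G : Type*) [Group G] : ℕ :=
  sSup {k | ∃ S : Set G, S.ncard = k ∧ ∀ x ∈ S, ∀ y ∈ S, x ≠ y → x * y ≠ y * x}

theorem centralizer_partition_is_minimal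
    {G : Type*} [Group G] [Finite G]
    {n : ℕ} (hn : 0 < n) (a : Fin n → G)
    (habel : ∀ i, ∀ x ∈ Subgroup.centralizer {a i}, ∀ y ∈ Subgroup.centralizer {a i},
      x * y = y * x)
    (A : Fin n → Set G) (hA : IsAbelianPartition A)
    (h1 : A ⟨0, hn⟩ = (Subgroup.centralizer {a ⟨0, hn⟩} : Set G))
    (hi : ∀ i : Fin n, i ≠ ⟨0, hn⟩ →
      A i = (Subgroup.centralizer {a i} : Set G) \ (Subgroup.center G : Set G)) :
    ∀ (m : ℕ) (B : Fin m → Set G), IsAbelianPartition B → n ≤ m := by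
  obtain ⟨hcard, hcover, hdisj, hcomm⟩ := hA
  -- Key: if a i commutes with a j and i ≠ j, contradiction.
  have key : ∀ i j : Fin n, i ≠ j → a i * a j ≠ a j * a i := by
    -- first a helper valid when j ≠ 0
    have main : ∀ i j : Fin n, i ≠ j → j ≠ ⟨0, hn⟩ → a i * a j ≠ a j * a i := by
      intro i j hij hj0 hc
      have haij : a i ∈ Subgroup.centralizer {a j} := by
        rw [Subgroup.mem_centralizer_singleton_iff]; exact hc
      have hsub : (Subgroup.centralizer {a j} : Set G) ⊆
          (Subgroup.centralizer {a i} : Set G) := by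
        intro x hx
        rw [SetLike.mem_coe, Subgroup.mem_centralizer_singleton_iff]
        exact habel j x hx (a i) haij
      have hAj : A j = (Subgroup.centralizer {a j} : Set G) \ (Subgroup.center G : Set G) :=
        hi j hj0
      have hAjAi : A j ⊆ A i := by
        by_cases hi0 : i = ⟨0, hn⟩
        · subst hi0
          rw [hAj, h1]
          exact fun x hx => hsub hx.1
        · rw [hAj, hi i hi0]
          exact fun x hx => ⟨hsub hx.1, hx.2⟩
      have hne : (A j).Nonempty := by
        apply Set.nonempty_of_ncard_ne_zero
        have := hcard j; omega
      obtain ⟨x, hx⟩ := hne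
      exact (hdisj hij.symm).ne_of_mem hx (hAjAi hx) rfl
    intro i j hij hc
    by_cases hj0 : j = ⟨0, hn⟩
    · have hi0 : i ≠ ⟨0, hn⟩ := fun h => hij (h.trans hj0.symm)
      exact main j i hij.symm hi0 hc.symm
    · exact main i j hij hj0 hc
  -- a is injective
  intro m B hB
  obtain ⟨hBcard, hBcover, hBdisj, hBcomm⟩ := hB
  have hf : ∀ i : Fin n, ∃ j : Fin m, a i ∈ B j := by
    intro i
    have : a i ∈ ⋃ j, B j := hBcover ▸ Set.mem_univ _
    exact Set.mem_iUnion.mp this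
  choose f hfmem using hf
  have hfinj : Function.Injective f := by
    intro i j hij
    by_contra hne
    exact key i j hne (hBcomm (f i) (a i) (hfmem i) (a j) (hij ▸ hfmem j))
  calc n = Fintype.card (Fin n) := (Fintype.card_fin n).symm
    _ ≤ Fintype.card (Fin m) := Fintype.card_le_of_injective f hfinj
    _ = m := Fintype.card_fin m
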